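/- Let f : ℝ^d → ℝ be differentiable with L-Lipschitz gradient (i.e. ‖∇f(x) − ∇f(y)‖ ≤ L‖x − y‖ for all x, y), and let ν > 0. Then the Gaussian smoothing f_ν is differentiable and its gradient ∇f_ν is Lipschitz continuous with some constant L_ν satisfying L_ν ≤ L; in particular ‖∇f_ν(x) − ∇f_ν(y)‖ ≤ L‖x − y‖ for all x, y ∈ ℝ^d. -/

import Mathlib

open MeasureTheory ProbabilityTheory

/-- The standard Gaussian measure `N(0, I_d)` on `ℝ^d = EuclideanSpace ℝ (Fin d)`. -/
noncomputable def stdGaussian (d : ℕ) : Measure (EuclideanSpace ℝ (Fin d)) :=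
  (Measure.pi fun _ : Fin d => gaussianReal 0 1).map
    (MeasurableEquiv.toLp 2 (Fin d → ℝ))

/-- The Gaussian smoothing `f_ν(x) = E_{u ∼ N(0,I_d)}[f(x + ν u)]`. -/
noncomputable def gaussianSmoothing (d : ℕ) (f : EuclideanSpace ℝ (Fin d) → ℝ) (ν : ℝ)
    (x : EuclideanSpace ℝ (Fin d)) : ℝ :=
  ∫ u, f (x + ν • u) ∂(stdGaussian d)

open Real in
lemma integrable_sq_gaussianReal : Integrable (fun x : ℝ => x ^ 2) (gaussianReal 0 1) := by
  rw [gaussianReal_of_var_ne_zero 0 one_ne_zero,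
    integrable_withDensity_iff (measurable_gaussianPDF 0 1)
      (ae_of_all _ fun x => ENNReal.ofReal_lt_top)]
  have h := (integrable_rpow_mul_exp_neg_mul_sq (b := (1:ℝ)/2) (by norm_num)
    (s := 2) (by norm_num)).const_mul ((Real.sqrt (2 * π * 1))⁻¹)
  refine h.congr (ae_of_all _ fun x => ?_)
  simp only [gaussianPDF_def]
  rw [ENNReal.toReal_ofReal (gaussianPDFReal_nonneg 0 1 x)]
  simp only [gaussianPDFReal, NNReal.coe_one, sub_zero, Real.rpow_two]
  ring_nf

instance stdGaussian_prob (d : ℕ) : IsProbabilityMeasure (stdGaussian d) :=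
  Measure.isProbabilityMeasure_map
    (MeasurableEquiv.toLp 2 (Fin d → ℝ)).measurable.aemeasurable

lemma pi_map_eval (d : ℕ) (i : Fin d) :
    (Measure.pi fun _ : Fin d => gaussianReal 0 1).map (Function.eval i) = gaussianReal 0 1 := by
  ext s hs
  rw [Measure.map_apply (measurable_pi_apply i) hs, ← Set.univ_pi_update_univ, Measure.pi_pi]
  rw [Finset.prod_eq_single i (fun j _ hj => by simp [Function.update_apply, hj]) (by simp)]
  simp

lemma integrable_sq_coord (d : ℕ) (i : Fin d) :
    Integrable (fun v : Fin d → ℝ => (v i) ^ 2)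
      (Measure.pi fun _ : Fin d => gaussianReal 0 1) := by
  have h := integrable_sq_gaussianReal
  rw [← pi_map_eval d i] at h
  exact (integrable_map_measure
    (continuous_pow 2).aestronglyMeasurable
    (measurable_pi_apply i).aemeasurable).mp h

lemma integrable_normSq_stdGaussian (d : ℕ) :
    Integrable (fun u : EuclideanSpace ℝ (Fin d) => ‖u‖ ^ 2) (stdGaussian d) := by
  rw [_root_.stdGaussian, integrable_map_equiv]
  have : ∀ v : Fin d → ℝ,
      ‖(MeasurableEquiv.toLp 2 (Fin d → ℝ)) v‖ ^ 2 = ∑ i, (v i) ^ 2 := by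
    intro v
    rw [EuclideanSpace.norm_eq, Real.sq_sqrt (by positivity)]
    simp [sq_abs]
  refine (integrable_finset_sum Finset.univ fun i _ => integrable_sq_coord d i).congr
    (ae_of_all _ fun v => ?_)
  exact (this v).symm

lemma integrable_norm_stdGaussian (d : ℕ) :
    Integrable (fun u : EuclideanSpace ℝ (Fin d) => ‖u‖) (stdGaussian d) := by
  refine Integrable.mono' ((integrable_const (1:ℝ)).add (integrable_normSq_stdGaussian d))
    continuous_norm.aestronglyMeasurable (ae_of_all _ fun u => ?_)
  simp only [Pi.add_apply]
  rw [Real.norm_of_nonneg (norm_nonneg u)]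
  nlinarith [norm_nonneg u, sq_nonneg (‖u‖ - 1)]

section quad
variable {F : Type*} [NormedAddCommGroup F] [InnerProductSpace ℝ F] [CompleteSpace F]

lemma norm_fderiv_sub_eq_norm_gradient_sub (f : F → ℝ) (z w : F) :
    ‖fderiv ℝ f z - fderiv ℝ f w‖ = ‖gradient f z - gradient f w‖ := by
  rw [gradient, gradient, ← map_sub]
  exact (LinearIsometryEquiv.norm_map _ _).symm

lemma quad_bound {L : ℝ} (hL : 0 ≤ L) (f : F → ℝ) (hf : Differentiable ℝ f)
    (hLip : ∀ x y, ‖gradient f x - gradient f y‖ ≤ L * ‖x - y‖) (a b : F) :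
    |f b - f a - inner ℝ (gradient f a) (b - a)| ≤ (L * ‖b - a‖) * ‖b - a‖ := by
  have key := (convex_segment a b).norm_image_sub_le_of_norm_hasFDerivWithin_le'
    (f := f) (f' := fun z => fderiv ℝ f z) (φ := fderiv ℝ f a) (C := L * ‖b - a‖)
    (fun z _ => (hf z).hasFDerivAt.hasFDerivWithinAt)
    (fun z hz => by
      rw [norm_fderiv_sub_eq_norm_gradient_sub]
      refine (hLip z a).trans (mul_le_mul_of_nonneg_left ?_ hL)
      have := dist_add_dist_of_mem_segment hz
      have h1 : dist a z ≤ dist a b := by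
        nlinarith [dist_nonneg (x := z) (y := b)]
      rw [dist_eq_norm, dist_eq_norm] at h1
      rw [show ‖z - a‖ = ‖a - z‖ from (norm_sub_rev _ _), show ‖b - a‖ = ‖a - b‖ from (norm_sub_rev _ _)]
      exact h1)
    (left_mem_segment ℝ a b) (right_mem_segment ℝ a b)
  have hApp : fderiv ℝ f a (b - a) = inner ℝ (gradient f a) (b - a) := by
    rw [gradient, ← InnerProductSpace.toDual_apply_apply,
      LinearIsometryEquiv.apply_symm_apply]
  rw [← hApp]
  exact key.trans_eq rfl

end quad

/-- If `f : ℝ^d → ℝ` is differentiable with `L`-Lipschitz gradient and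
`ν > 0`, then the Gaussian smoothing `f_ν` is differentiable and its gradient is
`L_ν`-Lipschitz for some `L_ν ≤ L`; in particular
`‖∇f_ν(x) − ∇f_ν(y)‖ ≤ L ‖x − y‖` for all `x, y`. -/
theorem gaussianSmoothing_gradient_lipschitz (d : ℕ) (L ν : ℝ) (hL : 0 < L) (hν : 0 < ν)
    (f : EuclideanSpace ℝ (Fin d) → ℝ) (hf : Differentiable ℝ f)
    (hLip : ∀ x y, ‖gradient f x - gradient f y‖ ≤ L * ‖x - y‖) :
    Differentiable ℝ (gaussianSmoothing d f ν) ∧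
      ∀ x y, ‖gradient (gaussianSmoothing d f ν) x - gradient (gaussianSmoothing d f ν) y‖
        ≤ L * ‖x - y‖ := by
  set μ := stdGaussian d with hμdef
  have hgc : Continuous (gradient f) := by
    refine (LipschitzWith.of_dist_le_mul (K := L.toNNReal) fun x y => ?_).continuous
    rw [dist_eq_norm, dist_eq_norm, Real.coe_toNNReal L hL.le]
    exact hLip x y
  have hnsmul : ∀ u : EuclideanSpace ℝ (Fin d), ‖ν • u‖ = ν * ‖u‖ := fun u => by
    rw [norm_smul, Real.norm_eq_abs, abs_of_pos hν]
  -- integrability of the shifted gradient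
  have hIg : ∀ x : EuclideanSpace ℝ (Fin d), Integrable (fun u => gradient f (x + ν • u)) μ := by
    intro x
    refine Integrable.mono' ((integrable_const ‖gradient f x‖).add
      ((integrable_norm_stdGaussian d).const_mul (L * ν)))
      ((hgc.comp (by fun_prop : Continuous fun u : EuclideanSpace ℝ (Fin d) => x + ν • u)).aestronglyMeasurable)
      (ae_of_all _ fun u => ?_)
    simp only [Pi.add_apply]
    have h1 : ‖gradient f (x + ν • u) - gradient f x‖ ≤ L * (ν * ‖u‖) := by
      have := hLip (x + ν • u) x
      rwa [add_sub_cancel_left, hnsmul u] at this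
    calc ‖gradient f (x + ν • u)‖
        ≤ ‖gradient f x‖ + ‖gradient f (x + ν • u) - gradient f x‖ := by
          rw [add_comm]; exact norm_le_insert' _ _
      _ ≤ ‖gradient f x‖ + L * ν * ‖u‖ := by rw [mul_assoc]; linarith [h1]
  -- integrability of the shifted function
  have hIf : ∀ x : EuclideanSpace ℝ (Fin d), Integrable (fun u => f (x + ν • u)) μ := by
    intro x
    refine Integrable.mono' (((integrable_const (|f x|)).add
      ((integrable_norm_stdGaussian d).const_mul (‖gradient f x‖ * ν))).add
      ((integrable_normSq_stdGaussian d).const_mul (L * ν ^ 2)))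
      ((hf.continuous.comp
        (by fun_prop : Continuous fun u : EuclideanSpace ℝ (Fin d) => x + ν • u)).aestronglyMeasurable)
      (ae_of_all _ fun u => ?_)
    simp only [Pi.add_apply]
    have hq := quad_bound hL.le f hf hLip x (x + ν • u)
    rw [add_sub_cancel_left, hnsmul u] at hq
    have hip : |inner (𝕜 := ℝ) (gradient f x) (ν • u)| ≤ ‖gradient f x‖ * (ν * ‖u‖) := by
      calc |inner (𝕜 := ℝ) (gradient f x) (ν • u)| ≤ ‖gradient f x‖ * ‖ν • u‖ :=
        abs_real_inner_le_norm _ _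
      _ = ‖gradient f x‖ * (ν * ‖u‖) := by rw [hnsmul u]
    rw [Real.norm_eq_abs]
    have h2 : |f (x + ν • u)| ≤ |f x| + |inner (𝕜 := ℝ) (gradient f x) (ν • u)|
        + (L * (ν * ‖u‖)) * (ν * ‖u‖) := by
      have := abs_sub_abs_le_abs_sub (f (x + ν • u))
        (f x + inner (𝕜 := ℝ) (gradient f x) (ν • u))
      have h3 := abs_add_le (f x) (inner (𝕜 := ℝ) (gradient f x) (ν • u))
      have h4 : |f (x + ν • u) - (f x + inner (𝕜 := ℝ) (gradient f x) (ν • u))|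
          ≤ (L * (ν * ‖u‖)) * (ν * ‖u‖) := by
        rw [show f (x + ν • u) - (f x + inner (𝕜 := ℝ) (gradient f x) (ν • u))
          = f (x + ν • u) - f x - inner (𝕜 := ℝ) (gradient f x) (ν • u) by ring]
        exact hq
      linarith [abs_sub_abs_le_abs_sub (f (x + ν • u))
        (f x + inner (𝕜 := ℝ) (gradient f x) (ν • u))]
    have hnn : 0 ≤ ν * ‖u‖ := by positivity
    calc |f (x + ν • u)| ≤ |f x| + ‖gradient f x‖ * (ν * ‖u‖) + (L * (ν * ‖u‖)) * (ν * ‖u‖) := by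
          linarith [hip]
      _ = |f x| + ‖gradient f x‖ * ν * ‖u‖ + L * ν ^ 2 * ‖u‖ ^ 2 := by ring
  -- inner products are integrable
  have hIinner : ∀ x v : EuclideanSpace ℝ (Fin d), Integrable (fun u => inner (𝕜 := ℝ) (gradient f (x + ν • u)) v) μ :=
    fun x v => (hIg x).inner_const v
  -- gradient candidate
  set G : EuclideanSpace ℝ (Fin d) → EuclideanSpace ℝ (Fin d) := fun x => ∫ u, gradient f (x + ν • u) ∂μ with hGdef
  have hG : ∀ x, HasGradientAt (gaussianSmoothing d f ν) (G x) x := by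
    intro x
    rw [hasGradientAt_iff_isLittleO]
    have key : ∀ y : EuclideanSpace ℝ (Fin d), ‖gaussianSmoothing d f ν y - gaussianSmoothing d f ν x
        - inner (𝕜 := ℝ) (G x) (y - x)‖ ≤ L * ‖y - x‖ * ‖y - x‖ := by
      intro y
      have h1 : inner (𝕜 := ℝ) (G x) (y - x)
          = ∫ u, inner (𝕜 := ℝ) (gradient f (x + ν • u)) (y - x) ∂μ := by
        rw [hGdef]
        rw [real_inner_comm, ← integral_inner (hIg x) (y - x)]
        exact integral_congr_ae (ae_of_all _ fun u => real_inner_comm _ _)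
      have h2 : gaussianSmoothing d f ν y - gaussianSmoothing d f ν x
          - inner (𝕜 := ℝ) (G x) (y - x)
          = ∫ u, (f (y + ν • u) - f (x + ν • u)
              - inner (𝕜 := ℝ) (gradient f (x + ν • u)) (y - x)) ∂μ := by
        have hsub : Integrable (fun u => f (y + ν • u) - f (x + ν • u)) μ :=
          (hIf y).sub (hIf x)
        rw [h1, gaussianSmoothing, gaussianSmoothing, ← integral_sub (hIf y) (hIf x),
          ← integral_sub hsub (hIinner x (y - x))]
      rw [h2]
      refine (norm_integral_le_of_norm_le (integrable_const (L * ‖y - x‖ * ‖y - x‖))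
        (ae_of_all _ fun u => ?_)).trans_eq (by simp)
      have hq := quad_bound hL.le f hf hLip (x + ν • u) (y + ν • u)
      rw [add_sub_add_right_eq_sub] at hq
      rw [Real.norm_eq_abs]
      exact hq
    rw [Asymptotics.isLittleO_iff]
    intro c hc
    filter_upwards [Metric.ball_mem_nhds x (show (0:ℝ) < c / L by positivity)] with y hy
    have hd : ‖y - x‖ < c / L := by rwa [Metric.mem_ball, dist_eq_norm] at hy
    calc ‖gaussianSmoothing d f ν y - gaussianSmoothing d f ν x
        - inner (𝕜 := ℝ) (G x) (y - x)‖ ≤ L * ‖y - x‖ * ‖y - x‖ := key y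
      _ ≤ c * ‖y - x‖ := by
          have hn : (0:ℝ) ≤ ‖y - x‖ := norm_nonneg _
          have : L * ‖y - x‖ ≤ c := by
            have h5 := (lt_div_iff₀ hL).mp hd
            nlinarith
          nlinarith
      _ = c * ‖y - x‖ := rfl
  have hdiff : Differentiable ℝ (gaussianSmoothing d f ν) := fun x => (hG x).differentiableAt
  refine ⟨hdiff, fun x y => ?_⟩
  rw [(hG x).gradient, (hG y).gradient]
  have h3 : G x - G y = ∫ u, (gradient f (x + ν • u) - gradient f (y + ν • u)) ∂μ := by
    rw [hGdef]; exact (integral_sub (hIg x) (hIg y)).symm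
  rw [h3]
  refine (norm_integral_le_of_norm_le (integrable_const (L * ‖x - y‖))
    (ae_of_all _ fun u => ?_)).trans_eq (by simp)
  have := hLip (x + ν • u) (y + ν • u)
  rwa [add_sub_add_right_eq_sub] at this
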